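/- Let X be a Tychonoff (completely regular Hausdorff) space with ind X = 0, i.e., whose clopen subsets form a base of the topology. Then there exists a topology τ on the free abelian group A(X) on X, realized as the group of finitely supported functions g : X → ℤ with pointwise addition, such that: (A(X), τ) is a Hausdorff topological group; τ has a base of neighborhoods of 0 consisting of open subgroups; the map sending x ∈ X to the indicator function δ_x of {x} is a homeomorphism of X onto a closed subspace of (A(X), τ); and for every n ∈ ℕ the set A_n(X) = {g : ∑_x |g(x)| ≤ n} of words of length at most n is closed in (A(X), τ). -/

import Mathlib

open Topology Set

namespace Stmt18
attribute [local instance] Classical.propDecidable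
noncomputable section
variable {X : Type*}

noncomputable def indic (V : Set X) : X → ℤ := fun x => if x ∈ V then 1 else 0

lemma indic_cont [TopologicalSpace X] {V : Set X} (hV : IsClopen V) : Continuous (indic V) := by
  have h : indic V = (fun b : Bool => if b then (1:ℤ) else 0) ∘ V.boolIndicator := by
    funext x; simp [indic, Set.boolIndicator]
  rw [h]
  exact continuous_of_discreteTopology.comp ((continuous_boolIndicator_iff_isClopen V).2 hV)

noncomputable def phi (f : X → ℤ) : (X →₀ ℤ) →+ ℤ :=
  (Finsupp.linearCombination ℤ f).toAddMonoidHom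

lemma phi_apply (f : X → ℤ) (g : X →₀ ℤ) : phi f g = ∑ x ∈ g.support, g x * f x := by
  simp [phi, Finsupp.linearCombination_apply, Finsupp.sum, smul_eq_mul]

lemma phi_single (f : X → ℤ) (x : X) : phi f (Finsupp.single x 1) = f x := by
  simp [phi, Finsupp.linearCombination_single]

lemma phi_indic (V : Set X) (g : X →₀ ℤ) :
    phi (indic V) g = ∑ x ∈ g.support.filter (· ∈ V), g x := by
  rw [phi_apply, Finset.sum_filter]
  congr 1; funext x; simp only [indic, mul_ite, mul_one, mul_zero]

lemma phi_indic_support {V : Set X} {g : X →₀ ℤ} {x₀ : X} (hx₀ : x₀ ∈ g.support)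
    (hV : x₀ ∈ V) (hdisj : ∀ y ∈ g.support, y ∈ V → y = x₀) :
    phi (indic V) g = g x₀ := by
  rw [phi_indic]
  have : g.support.filter (· ∈ V) = {x₀} := by
    ext y
    simp only [Finset.mem_filter, Finset.mem_singleton]
    exact ⟨fun ⟨h1, h2⟩ => hdisj y h1 h2, fun h => h ▸ ⟨hx₀, hV⟩⟩
  rw [this, Finset.sum_singleton]

lemma natAbs_sum_le {α : Type*} (s : Finset α) (f : α → ℤ) :
    (∑ i ∈ s, f i).natAbs ≤ ∑ i ∈ s, (f i).natAbs := by
  classical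
  induction s using Finset.induction with
  | empty => simp
  | insert _ _ h ih =>
    rw [Finset.sum_insert h, Finset.sum_insert h]
    exact le_trans (Int.natAbs_add_le _ _) (Nat.add_le_add_left ih _)

section Top
variable [TopologicalSpace X] [T35Space X]

lemma exists_clopen_avoid (hzd : ∀ (x : X) (U : Set X), IsOpen U → x ∈ U →
      ∃ V : Set X, IsClopen V ∧ x ∈ V ∧ V ⊆ U) (x : X) (s : Finset X) (hx : x ∉ s) :
    ∃ V : Set X, IsClopen V ∧ x ∈ V ∧ ∀ y ∈ s, y ∉ V := by
  have hU : IsOpen ((↑s : Set X))ᶜ := (s.finite_toSet.isClosed).isOpen_compl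
  obtain ⟨V, hV, hxV, hVs⟩ := hzd x _ hU (by simpa using hx)
  exact ⟨V, hV, hxV, fun y hy hyV => (hVs hyV) (by simpa using hy)⟩

lemma exists_disjoint_clopen (hzd : ∀ (x : X) (U : Set X), IsOpen U → x ∈ U →
      ∃ V : Set X, IsClopen V ∧ x ∈ V ∧ V ⊆ U) (s : Finset X) :
    ∃ V : X → Set X, (∀ x, IsClopen (V x)) ∧
      (∀ x ∈ s, x ∈ V x ∧ ∀ y ∈ s, y ∈ V x → y = x) ∧
      ∀ x ∈ s, ∀ y ∈ s, x ≠ y → V x ∩ V y = ∅ := by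
  have h : ∀ x : X, ∃ W : Set X, IsClopen W ∧
      (x ∈ s → x ∈ W ∧ ∀ y ∈ s.erase x, y ∉ W) := by
    intro x
    by_cases hx : x ∈ s
    · obtain ⟨W, h1, h2, h3⟩ := exists_clopen_avoid hzd x (s.erase x) (s.notMem_erase x)
      exact ⟨W, h1, fun _ => ⟨h2, h3⟩⟩
    · exact ⟨∅, isClopen_empty, fun h => absurd h hx⟩
  choose W hWc hW using h
  refine ⟨fun x => W x \ ⋃ y ∈ s.erase x, W y, ?_, ?_, ?_⟩
  · intro x
    exact (hWc x).diff (isClopen_biUnion_finset (fun y _ => hWc y))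
  · intro x hx
    obtain ⟨h2, h3⟩ := hW x hx
    refine ⟨⟨h2, ?_⟩, ?_⟩
    · simp only [Set.mem_iUnion, not_exists]
      intro y hy
      exact (hW y (Finset.mem_of_mem_erase hy)).2 x
        (Finset.mem_erase.2 ⟨(Finset.ne_of_mem_erase hy).symm, hx⟩)
    · intro y hy hyV
      by_contra hne
      exact hyV.2 (Set.mem_biUnion (Finset.mem_erase.2 ⟨hne, hy⟩) (hW y hy).1)
  · intro x hx y hy hne
    rw [Set.eq_empty_iff_forall_notMem]
    rintro z ⟨⟨hzx, hz2⟩, hzy, -⟩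
    exact hz2 (Set.mem_biUnion (Finset.mem_erase.2 ⟨hne.symm, hy⟩) hzy)

/-- The canonical map into the product over all continuous integer-valued functions. -/
noncomputable def PhiMap (X : Type*) [TopologicalSpace X] :
    (X →₀ ℤ) →+ ({f : X → ℤ // Continuous f} → ℤ) where
  toFun g f := phi f.1 g
  map_zero' := by funext f; simp
  map_add' g h := by funext f; simp

lemma PhiMap_injective (hzd : ∀ (x : X) (U : Set X), IsOpen U → x ∈ U →
      ∃ V : Set X, IsClopen V ∧ x ∈ V ∧ V ⊆ U) : Function.Injective (PhiMap X) := by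
  rw [injective_iff_map_eq_zero]
  intro g hg
  by_contra hg0
  obtain ⟨x₀, hx₀⟩ := Finsupp.support_nonempty_iff.2 hg0
  obtain ⟨V, hV, hxV, hVs⟩ := exists_clopen_avoid hzd x₀ (g.support.erase x₀)
    (g.support.notMem_erase x₀)
  have hval : phi (indic V) g = g x₀ := by
    apply phi_indic_support hx₀ hxV
    intro y hy hyV
    by_contra hne
    exact hVs y (Finset.mem_erase.2 ⟨hne, hy⟩) hyV
  have : phi (indic V) g = 0 := congrFun hg ⟨indic V, indic_cont hV⟩
  rw [hval] at this
  exact (Finsupp.mem_support_iff.1 hx₀) this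

end Top
end
end Stmt18


/-- For every Tychonoff space `X` with `ind X = 0` (the clopen sets form a base)
there is a Hausdorff group topology on the free abelian group on `X`, realized
as the finitely supported functions `X →₀ ℤ`, with a base of neighborhoods of
`0` consisting of open subgroups, in which `X` (embedded via `x ↦ δ_x`) is a
closed subspace and each set of words of length at most `n` is closed. -/
theorem stmt18 {X : Type*} [TopologicalSpace X] [T35Space X]
    (hzd : ∀ (x : X) (U : Set X), IsOpen U → x ∈ U →
      ∃ V : Set X, IsClopen V ∧ x ∈ V ∧ V ⊆ U) :
    ∃ τ : TopologicalSpace (X →₀ ℤ),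
      @IsTopologicalAddGroup (X →₀ ℤ) τ _ ∧
      @T2Space (X →₀ ℤ) τ ∧
      (∀ U : Set (X →₀ ℤ), U ∈ @nhds _ τ 0 →
        ∃ H : AddSubgroup (X →₀ ℤ), τ.IsOpen (H : Set (X →₀ ℤ)) ∧
          (H : Set (X →₀ ℤ)) ⊆ U) ∧
      @Topology.IsClosedEmbedding X (X →₀ ℤ) _ τ (fun x => Finsupp.single x 1) ∧
      (∀ n : ℕ, @IsClosed _ τ
        {g : X →₀ ℤ | (g.support.sum fun x => (g x).natAbs) ≤ n}) := by
  classical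
  letI τ : TopologicalSpace (X →₀ ℤ) := TopologicalSpace.induced (Stmt18.PhiMap X) inferInstance
  have hΦcont : Continuous (Stmt18.PhiMap X) := continuous_induced_dom
  have hlevel : ∀ (f : {f : X → ℤ // Continuous f}) (c : ℤ),
      IsOpen {h : X →₀ ℤ | Stmt18.PhiMap X h f = c} := fun f c =>
    (isOpen_discrete {c}).preimage ((continuous_apply f).comp hΦcont)
  refine ⟨τ, topologicalAddGroup_induced (Stmt18.PhiMap X),
    Topology.IsEmbedding.t2Space ⟨⟨rfl⟩, Stmt18.PhiMap_injective hzd⟩, ?_, ?_, ?_⟩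
  · -- neighborhoods of 0 contain open subgroups
    intro U hU
    rw [nhds_induced, map_zero] at hU
    obtain ⟨t, ht, hsub⟩ := Filter.mem_comap.1 hU
    rw [nhds_pi] at ht
    obtain ⟨I, hIfin, sI, hsI, hsub2⟩ := Filter.mem_pi.1 ht
    have h0 : ∀ f, (0 : {f : X → ℤ // Continuous f} → ℤ) f ∈ sI f :=
      fun f => mem_of_mem_nhds (hsI f)
    refine ⟨{ carrier := {g | ∀ f ∈ I, Stmt18.PhiMap X g f = 0},
              add_mem' := ?_, zero_mem' := ?_, neg_mem' := ?_ }, ?_, ?_⟩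
    · intro a b ha hb f hf
      simp only [map_add, Pi.add_apply, ha f hf, hb f hf, add_zero]
    · intro f hf; simp
    · intro a ha f hf
      simp only [map_neg, Pi.neg_apply, ha f hf, neg_zero]
    · show IsOpen {g : X →₀ ℤ | ∀ f ∈ I, Stmt18.PhiMap X g f = 0}
      have heq : {g : X →₀ ℤ | ∀ f ∈ I, Stmt18.PhiMap X g f = 0}
          = Stmt18.PhiMap X ⁻¹' (I.pi fun _ => ({0} : Set ℤ)) := by
        ext g; simp [Set.mem_pi]
      rw [heq]
      exact (isOpen_set_pi hIfin fun f _ => isOpen_discrete _).preimage hΦcont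
    · intro g hg
      apply hsub
      apply hsub2
      intro f hf
      have := hg f hf
      simpa [this] using h0 f
  · -- closed embedding
    have hψeq : (fun x => Stmt18.PhiMap X (Finsupp.single x 1))
        = (fun (x : X) (f : {f : X → ℤ // Continuous f}) => f.1 x) := by
      funext x f
      exact Stmt18.phi_single f.1 x
    have hδcont : Continuous (fun x : X => Finsupp.single x (1 : ℤ)) := by
      apply continuous_induced_rng.2
      rw [show (Stmt18.PhiMap X ∘ fun x : X => Finsupp.single x (1:ℤ))
          = (fun (x : X) (f : {f : X → ℤ // Continuous f}) => f.1 x) from hψeq]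
      exact continuous_pi fun f => f.2
    have hind : Topology.IsInducing (fun x : X => Finsupp.single x (1 : ℤ)) := by
      constructor
      apply le_antisymm (continuous_iff_le_induced.1 hδcont)
      rw [TopologicalSpace.le_def]
      intro U hU
      choose! V hV using fun (x : X) (hx : x ∈ U) => hzd x U hU hx
      have hUeq : U = ⋃ x ∈ U, V x := by
        apply Set.Subset.antisymm
        · intro x hx
          exact Set.mem_biUnion hx (hV x hx).2.1
        · intro y hy
          obtain ⟨x, hx, hyx⟩ := Set.mem_iUnion₂.1 hy
          exact (hV x hx).2.2 hyx
      rw [hUeq]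
      apply @isOpen_biUnion X X
        (TopologicalSpace.induced (fun x : X => Finsupp.single x (1:ℤ)) τ) U V
      intro x hx
      have hVx : V x = (fun x : X => Finsupp.single x (1:ℤ)) ⁻¹'
          {h : X →₀ ℤ | Stmt18.PhiMap X h ⟨Stmt18.indic (V x), Stmt18.indic_cont (hV x hx).1⟩ = 1} := by
        ext y
        simp only [Set.mem_preimage, Set.mem_setOf_eq]
        show y ∈ V x ↔ Stmt18.phi (Stmt18.indic (V x)) (Finsupp.single y 1) = 1
        rw [Stmt18.phi_single]
        unfold Stmt18.indic
        by_cases hy : y ∈ V x <;> simp [hy]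
      rw [hVx]
      exact isOpen_induced (hlevel _ 1)
    refine ⟨⟨hind, Finsupp.single_left_injective one_ne_zero⟩, ?_⟩
    -- range closed
    rw [← isOpen_compl_iff, isOpen_iff_forall_mem_open]
    intro g hg
    obtain ⟨V, hVc, hV1, hV2⟩ := Stmt18.exists_disjoint_clopen hzd g.support
    set f1 : {f : X → ℤ // Continuous f} := ⟨fun _ => 1, continuous_const⟩ with hf1
    refine ⟨{h : X →₀ ℤ | Stmt18.PhiMap X h f1 = Stmt18.PhiMap X g f1 ∧
        ∀ x ∈ g.support,
          Stmt18.PhiMap X h ⟨Stmt18.indic (V x), Stmt18.indic_cont (hVc x)⟩ = g x},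
      ?_, ?_, ?_⟩
    · -- subset of complement of range
      rintro h ⟨h1, h2⟩
      simp only [Set.mem_compl_iff, Set.mem_range, not_exists]
      intro y hy
      -- h = single y 1
      have hval1 : Stmt18.PhiMap X h f1 = 1 := by
        rw [← hy]
        exact Stmt18.phi_single _ y
      have hsum : Stmt18.PhiMap X g f1 = ∑ x ∈ g.support, g x := by
        show Stmt18.phi (fun _ => 1) g = _
        rw [Stmt18.phi_apply]
        simp
      have hcoef : ∀ x ∈ g.support, g x = 1 := by
        intro x hx
        have hthis := h2 x hx
        rw [← hy] at hthis
        have this2 : Stmt18.indic (V x) y = g x := by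
          rw [← Stmt18.phi_single (Stmt18.indic (V x)) y]; exact hthis
        unfold Stmt18.indic at this2
        by_cases hyV : y ∈ V x
        · rw [if_pos hyV] at this2; omega
        · rw [if_neg hyV] at this2
          exact absurd this2.symm (Finsupp.mem_support_iff.1 hx)
      have hcard : ((g.support.card : ℤ)) = 1 := by
        have : Stmt18.PhiMap X g f1 = (g.support.card : ℤ) := by
          rw [hsum, Finset.sum_congr rfl hcoef]
          simp
        rw [← this, ← h1, hval1]
      have hcard' : g.support.card = 1 := by exact_mod_cast hcard
      obtain ⟨x₁, hx₁⟩ := Finset.card_eq_one.1 hcard'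
      have hgx : g x₁ = 1 := hcoef x₁ (hx₁ ▸ Finset.mem_singleton_self x₁)
      have : g = Finsupp.single x₁ 1 := by
        rw [← hgx]
        exact Finsupp.support_subset_singleton.1 (hx₁ ▸ Finset.Subset.refl _)
      exact hg ⟨x₁, this.symm⟩
    · -- open
      have hsplit : {h : X →₀ ℤ | Stmt18.PhiMap X h f1 = Stmt18.PhiMap X g f1 ∧
          ∀ x ∈ g.support,
            Stmt18.PhiMap X h ⟨Stmt18.indic (V x), Stmt18.indic_cont (hVc x)⟩ = g x}
          = {h : X →₀ ℤ | Stmt18.PhiMap X h f1 = Stmt18.PhiMap X g f1} ∩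
            ⋂ x ∈ g.support,
            {h : X →₀ ℤ | Stmt18.PhiMap X h ⟨Stmt18.indic (V x), Stmt18.indic_cont (hVc x)⟩ = g x} := by
        ext h
        simp only [Set.mem_setOf_eq, Set.mem_inter_iff, Set.mem_iInter]
      rw [hsplit]
      exact (hlevel f1 _).inter (isOpen_biInter_finset fun x hx => hlevel _ _)
    · -- g in the set
      refine ⟨rfl, fun x hx => ?_⟩
      exact Stmt18.phi_indic_support hx (hV1 x hx).1 (hV1 x hx).2
  · -- words of length ≤ n closed
    intro n
    rw [← isOpen_compl_iff, isOpen_iff_forall_mem_open]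
    intro g hg
    rw [Set.mem_compl_iff, Set.mem_setOf_eq, not_le] at hg
    obtain ⟨V, hVc, hV1, hV2⟩ := Stmt18.exists_disjoint_clopen hzd g.support
    refine ⟨{h : X →₀ ℤ | ∀ x ∈ g.support,
        Stmt18.PhiMap X h ⟨Stmt18.indic (V x), Stmt18.indic_cont (hVc x)⟩ = g x},
      ?_, ?_, ?_⟩
    · intro h hh
      rw [Set.mem_compl_iff, Set.mem_setOf_eq, not_le]
      refine lt_of_lt_of_le hg ?_
      -- length g ≤ length h
      have key : ∀ x ∈ g.support,
          (g x).natAbs ≤ ∑ y ∈ h.support.filter (· ∈ V x), (h y).natAbs := by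
        intro x hx
        have := hh x hx
        have heq : g x = ∑ y ∈ h.support.filter (· ∈ V x), h y := by
          rw [← this]; exact (Stmt18.phi_indic (V x) h).symm ▸ rfl
        rw [heq]
        exact Stmt18.natAbs_sum_le _ _
      calc ∑ x ∈ g.support, (g x).natAbs
          ≤ ∑ x ∈ g.support, ∑ y ∈ h.support.filter (· ∈ V x), (h y).natAbs :=
            Finset.sum_le_sum key
        _ = ∑ y ∈ g.support.biUnion (fun x => h.support.filter (· ∈ V x)), (h y).natAbs := by
            rw [Finset.sum_biUnion]
            intro x hx y hy hxy
            rw [Function.onFun, Finset.disjoint_left]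
            intro z hzx hzy
            have h1 : z ∈ V x := (Finset.mem_filter.1 hzx).2
            have h2 : z ∈ V y := (Finset.mem_filter.1 hzy).2
            have := hV2 x hx y hy hxy
            exact absurd (Set.mem_inter h1 h2) (this ▸ Set.notMem_empty z)
        _ ≤ ∑ y ∈ h.support, (h y).natAbs := by
            apply Finset.sum_le_sum_of_subset
            intro y hy
            obtain ⟨x, _, hy2⟩ := Finset.mem_biUnion.1 hy
            exact (Finset.mem_filter.1 hy2).1
    · have heq : {h : X →₀ ℤ | ∀ x ∈ g.support,
          Stmt18.PhiMap X h ⟨Stmt18.indic (V x), Stmt18.indic_cont (hVc x)⟩ = g x}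
          = ⋂ x ∈ g.support,
            {h : X →₀ ℤ | Stmt18.PhiMap X h ⟨Stmt18.indic (V x), Stmt18.indic_cont (hVc x)⟩ = g x} := by
        ext h
        simp only [Set.mem_setOf_eq, Set.mem_iInter]
      rw [heq]
      exact isOpen_biInter_finset fun x hx => hlevel _ _
    · intro x hx
      exact Stmt18.phi_indic_support hx (hV1 x hx).1 (hV1 x hx).2
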